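/- If Ψ_{U,M,N} is well defined and U = U_1 ⊔ … ⊔ U_k is a partition of U into clopen sets, then each Ψ_{U_i,M,N} is well defined, these transformations pairwise commute, and Ψ_{U,M,N} = Ψ_{U_1,M,N} ∘ … ∘ Ψ_{U_k,M,N}. Moreover, if N − M ≥ 2 and M < K < N, then Ψ_{U,M,N} = Ψ_{U,M,K} ∘ Ψ_{U,K,N}. -/

import Mathlib

open scoped Classical

variable {X : Type*} [TopologicalSpace X]

/-- The `i`-th power (for `i : ℤ`) of the homeomorphism `T`, as a map `X → X`. -/
def Tpow (T : X ≃ₜ X) (i : ℤ) : X → X := ⇑((T.toEquiv ^ i : Equiv.Perm X))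

/-- `Ψ_{U,M,N}` is well defined: the sets `T^M(U), …, T^N(U)` are pairwise disjoint. -/
def PsiDefined (T : X ≃ₜ X) (U : Set X) (M N : ℤ) : Prop :=
  ∀ i j : ℤ, M ≤ i → i ≤ N → M ≤ j → j ≤ N → i ≠ j →
    Disjoint (Tpow T i '' U) (Tpow T j '' U)

/-- The transformation `Ψ_{U,M,N}`: equal to `T` on `T^M(U) ∪ … ∪ T^{N-1}(U)`,
to `T^{M-N}` on `T^N(U)`, and to the identity elsewhere. -/
noncomputable def Psi (T : X ≃ₜ X) (U : Set X) (M N : ℤ) : X → X := fun x =>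
  if ∃ i : ℤ, M ≤ i ∧ i < N ∧ x ∈ Tpow T i '' U then T x
  else if x ∈ Tpow T N '' U then Tpow T (M - N) x
  else x

section Aux

variable (T : X ≃ₜ X)

lemma tpow_add (a b : ℤ) (x : X) : Tpow T (a + b) x = Tpow T a (Tpow T b x) := by
  simp [Tpow, zpow_add]

lemma tpow_one (x : X) : Tpow T 1 x = T x := by simp [Tpow]

lemma tpow_mem {S : Set X} {l : ℤ} {x : X} (a : ℤ) (hx : x ∈ Tpow T l '' S) :
    Tpow T a x ∈ Tpow T (a + l) '' S := by
  obtain ⟨u, hu, rfl⟩ := hx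
  exact ⟨u, hu, tpow_add T a l u⟩

lemma tpow_injective (l : ℤ) : Function.Injective (Tpow T l) :=
  (T.toEquiv ^ l : Equiv.Perm X).injective

lemma psiDefined_mono {U V : Set X} {M N M' N' : ℤ} (h : PsiDefined T U M N)
    (hV : V ⊆ U) (hM : M ≤ M') (hN : N' ≤ N) : PsiDefined T V M' N' :=
  fun i j hi hi' hj hj' hij =>
    (h i j (hM.trans hi) (hi'.trans hN) (hM.trans hj) (hj'.trans hN) hij).mono
      (Set.image_mono hV) (Set.image_mono hV)

lemma not_mem_other {U V W : Set X} {M N l m : ℤ} (h : PsiDefined T U M N)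
    (hV : V ⊆ U) (hW : W ⊆ U) (hVW : Disjoint V W)
    (hlM : M ≤ l) (hlN : l ≤ N) (hmM : M ≤ m) (hmN : m ≤ N)
    {x : X} (hx : x ∈ Tpow T l '' V) : x ∉ Tpow T m '' W := by
  intro hx'
  rcases eq_or_ne l m with rfl | hne
  · exact Set.disjoint_left.1
      (Set.disjoint_image_of_injective (tpow_injective T l) hVW) hx hx'
  · exact Set.disjoint_left.1 ((h l m hlM hlN hmM hmN hne).mono
      (Set.image_mono hV) (Set.image_mono hW)) hx hx'

lemma psi_apply_T {U : Set X} {M N l : ℤ} {x : X} (hlM : M ≤ l) (hlN : l < N)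
    (hx : x ∈ Tpow T l '' U) : Psi T U M N x = T x := by
  simp only [Psi]
  rw [if_pos ⟨l, hlM, hlN, hx⟩]

lemma psi_apply_back {U : Set X} {M N : ℤ} {x : X} (h : PsiDefined T U M N)
    (hx : x ∈ Tpow T N '' U) : Psi T U M N x = Tpow T (M - N) x := by
  have h1 : ¬ ∃ i : ℤ, M ≤ i ∧ i < N ∧ x ∈ Tpow T i '' U := by
    rintro ⟨i, hiM, hiN, hxi⟩
    exact Set.disjoint_left.1 (h i N hiM hiN.le (hiM.trans hiN.le) le_rfl hiN.ne) hxi hx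
  simp only [Psi]
  rw [if_neg h1, if_pos hx]

lemma psi_apply_id {U : Set X} {M N : ℤ} {x : X} (hMN : M ≤ N)
    (hx : ∀ l, M ≤ l → l ≤ N → x ∉ Tpow T l '' U) : Psi T U M N x = x := by
  have h1 : ¬ ∃ i : ℤ, M ≤ i ∧ i < N ∧ x ∈ Tpow T i '' U := by
    rintro ⟨i, hiM, hiN, hxi⟩
    exact hx i hiM hiN.le hxi
  simp only [Psi]
  rw [if_neg h1, if_neg (hx N hMN le_rfl)]

lemma psi_mem_support {U : Set X} {M N l : ℤ} {x : X} (h : PsiDefined T U M N)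
    (hMN : M < N) (hlM : M ≤ l) (hlN : l ≤ N) (hx : x ∈ Tpow T l '' U) :
    ∃ l', M ≤ l' ∧ l' ≤ N ∧ Psi T U M N x ∈ Tpow T l' '' U := by
  rcases lt_or_eq_of_le hlN with hlt | rfl
  · refine ⟨1 + l, by omega, by omega, ?_⟩
    rw [psi_apply_T T hlM hlt hx, ← tpow_one T x]
    exact tpow_mem T 1 hx
  · refine ⟨M, le_rfl, hMN.le, ?_⟩
    rw [psi_apply_back T h hx]
    have h2 := tpow_mem T (M - l) hx
    rwa [show M - l + l = M by ring] at h2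

lemma psi_empty (M N : ℤ) : Psi T ∅ M N = id := by
  funext x
  simp [Psi]

lemma psi_union {U V W : Set X} {M N : ℤ} (hMN : M < N) (h : PsiDefined T U M N)
    (hV : V ⊆ U) (hW : W ⊆ U) (hVW : Disjoint V W) :
    Psi T (V ∪ W) M N = Psi T V M N ∘ Psi T W M N := by
  have hVW' : V ∪ W ⊆ U := Set.union_subset hV hW
  funext x
  by_cases hxV : ∃ l, M ≤ l ∧ l ≤ N ∧ x ∈ Tpow T l '' V
  · obtain ⟨l, hlM, hlN, hxl⟩ := hxV
    have hW0 : Psi T W M N x = x :=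
      psi_apply_id T hMN.le fun m hm hm' => not_mem_other T h hV hW hVW hlM hlN hm hm' hxl
    simp only [Function.comp_apply, hW0]
    rcases lt_or_eq_of_le hlN with hlt | rfl
    · rw [psi_apply_T T hlM hlt hxl,
        psi_apply_T T hlM hlt (Set.image_mono Set.subset_union_left hxl)]
    · rw [psi_apply_back T (psiDefined_mono T h hV le_rfl le_rfl) hxl,
        psi_apply_back T (psiDefined_mono T h hVW' le_rfl le_rfl)
          (Set.image_mono Set.subset_union_left hxl)]
  · by_cases hxW : ∃ l, M ≤ l ∧ l ≤ N ∧ x ∈ Tpow T l '' W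
    · obtain ⟨l, hlM, hlN, hxl⟩ := hxW
      obtain ⟨l', hl'M, hl'N, hmem⟩ :=
        psi_mem_support T (psiDefined_mono T h hW le_rfl le_rfl) hMN hlM hlN hxl
      have hV0 : Psi T V M N (Psi T W M N x) = Psi T W M N x := psi_apply_id T hMN.le
        fun m hm hm' => not_mem_other T h hW hV hVW.symm hl'M hl'N hm hm' hmem
      simp only [Function.comp_apply, hV0]
      rcases lt_or_eq_of_le hlN with hlt | rfl
      · rw [psi_apply_T T hlM hlt hxl,
          psi_apply_T T hlM hlt (Set.image_mono Set.subset_union_right hxl)]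
      · rw [psi_apply_back T (psiDefined_mono T h hW le_rfl le_rfl) hxl,
          psi_apply_back T (psiDefined_mono T h hVW' le_rfl le_rfl)
            (Set.image_mono Set.subset_union_right hxl)]
    · push_neg at hxV hxW
      have hid : ∀ m, M ≤ m → m ≤ N → x ∉ Tpow T m '' (V ∪ W) := by
        intro m hm hm' hx'
        rw [Set.image_union] at hx'
        rcases hx' with hx' | hx'
        · exact hxV m hm hm' hx'
        · exact hxW m hm hm' hx'
      rw [Function.comp_apply, psi_apply_id T hMN.le hxW, psi_apply_id T hMN.le hxV,
        psi_apply_id T hMN.le hid]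

lemma psi_foldr {U : Set X} {M N : ℤ} (hMN : M < N) (h : PsiDefined T U M N)
    {k : ℕ} (Us : Fin k → Set X) (hsub : ∀ i, Us i ⊆ U)
    (hdisj : ∀ i j, i ≠ j → Disjoint (Us i) (Us j)) :
    ∀ L : List (Fin k), L.Nodup →
      (List.map (fun i => Psi T (Us i) M N) L).foldr (· ∘ ·) id
        = Psi T (⋃ i ∈ L, Us i) M N := by
  intro L
  induction L with
  | nil => intro _; simp [psi_empty]
  | cons j L ih =>
    intro hnd
    rw [List.nodup_cons] at hnd
    have hd : Disjoint (Us j) (⋃ i ∈ L, Us i) := by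
      rw [Set.disjoint_iUnion₂_right]
      intro i hi
      exact hdisj j i (fun e => hnd.1 (e ▸ hi))
    have hsubL : (⋃ i ∈ L, Us i) ⊆ U := Set.iUnion₂_subset fun i _ => hsub i
    have he : (⋃ i ∈ j :: L, Us i) = Us j ∪ ⋃ i ∈ L, Us i := by
      ext x
      simp [List.mem_cons, or_and_right, exists_or]
    rw [List.map_cons, List.foldr_cons, ih hnd.2, he,
      psi_union T hMN h (hsub j) hsubL hd]

end Aux

theorem stmt18 [CompactSpace X] [T2Space X]
    [TotallyDisconnectedSpace X] (T : X ≃ₜ X) (U : Set X) (hU : IsClopen U)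
    (M N : ℤ) (hMN : M < N) (h : PsiDefined T U M N)
    (k : ℕ) (Us : Fin k → Set X) (hUs : ∀ i, IsClopen (Us i))
    (hdisj : ∀ i j : Fin k, i ≠ j → Disjoint (Us i) (Us j))
    (hunion : U = ⋃ i, Us i) :
    (∀ i, PsiDefined T (Us i) M N) ∧
    (∀ i j : Fin k,
      Psi T (Us i) M N ∘ Psi T (Us j) M N = Psi T (Us j) M N ∘ Psi T (Us i) M N) ∧
    Psi T U M N = (List.ofFn fun i : Fin k => Psi T (Us i) M N).foldr (· ∘ ·) id ∧
    (2 ≤ N - M → ∀ K : ℤ, M < K → K < N →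
      Psi T U M N = Psi T U M K ∘ Psi T U K N) := by
  have hsub : ∀ i, Us i ⊆ U := fun i => by
    rw [hunion]; exact Set.subset_iUnion Us i
  refine ⟨fun i => psiDefined_mono T h (hsub i) le_rfl le_rfl, ?_, ?_, ?_⟩
  · -- commutation
    intro i j
    rcases eq_or_ne i j with rfl | hne
    · rfl
    · rw [← psi_union T hMN h (hsub i) (hsub j) (hdisj i j hne),
        ← psi_union T hMN h (hsub j) (hsub i) (hdisj j i hne.symm), Set.union_comm]
  · -- product decomposition
    have hf := psi_foldr T hMN h Us hsub hdisj (List.finRange k) (List.nodup_finRange k)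
    rw [List.ofFn_eq_map, hf]
    congr 1
    rw [hunion]
    ext x
    simp [Set.mem_iUnion, List.mem_finRange]
  · -- splitting the interval
    intro _ K hMK hKN
    have hMK' : PsiDefined T U M K := psiDefined_mono T h subset_rfl le_rfl hKN.le
    have hKN' : PsiDefined T U K N := psiDefined_mono T h subset_rfl hMK.le le_rfl
    funext x
    by_cases hx : ∃ l, M ≤ l ∧ l ≤ N ∧ x ∈ Tpow T l '' U
    · obtain ⟨l, hlM, hlN, hxl⟩ := hx
      have hnot : ∀ m, M ≤ m → m ≤ N → m ≠ l → x ∉ Tpow T m '' U := fun m hm hm' hne hx' =>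
        Set.disjoint_left.1 (h m l hm hm' hlM hlN hne) hx' hxl
      rcases lt_or_ge l K with hlK | hKl
      · have h1 : Psi T U K N x = x := psi_apply_id T hKN.le fun m hm hm' =>
          hnot m (hMK.le.trans hm) hm' (by omega)
        simp only [Function.comp_apply, h1]
        rw [psi_apply_T T hlM (hlK.trans hKN) hxl, psi_apply_T T hlM hlK hxl]
      · rcases lt_or_eq_of_le hlN with hlN' | rfl
        · have h1 : Psi T U K N x = T x := psi_apply_T T hKl hlN' hxl
          have hTx : T x ∈ Tpow T (1 + l) '' U := by
            rw [← tpow_one T x]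
            exact tpow_mem T 1 hxl
          have hnotT : ∀ m, M ≤ m → m ≤ N → m ≠ 1 + l → T x ∉ Tpow T m '' U :=
            fun m hm hm' hne hx' =>
              Set.disjoint_left.1 (h m (1 + l) hm hm' (by omega) (by omega) hne) hx' hTx
          have h2 : Psi T U M K (T x) = T x := psi_apply_id T hMK.le fun m hm hm' =>
            hnotT m hm (hm'.trans hKN.le) (by omega)
          simp only [Function.comp_apply, h1, h2]
          exact psi_apply_T T hlM hlN' hxl
        · have h1 : Psi T U K l x = Tpow T (K - l) x := psi_apply_back T hKN' hxl
          have hmem : Tpow T (K - l) x ∈ Tpow T K '' U := by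
            have h2 := tpow_mem T (K - l) hxl
            rwa [show K - l + l = K by ring] at h2
          have h2 : Psi T U M K (Tpow T (K - l) x) = Tpow T (M - K) (Tpow T (K - l) x) :=
            psi_apply_back T hMK' hmem
          simp only [Function.comp_apply, h1, h2, ← tpow_add,
            show M - K + (K - l) = M - l by ring]
          exact psi_apply_back T h hxl
    · push_neg at hx
      have h1 : Psi T U K N x = x := psi_apply_id T hKN.le fun m hm hm' =>
        hx m (hMK.le.trans hm) hm'
      have h2 : Psi T U M K x = x := psi_apply_id T hMK.le fun m hm hm' =>
        hx m hm (hm'.trans hKN.le)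
      have h3 : Psi T U M N x = x := psi_apply_id T hMN.le hx
      simp [h1, h2, h3]
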